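/- Let r ≥ 3 and let Q_r be the graph obtained from the complete (r+1)-partite graph K_{1,2,2,...,2} (one part of size 1 and r parts of size 2) by deleting all but two independent edges between the last two parts A_r and A_{r+1}. Let G_m be obtained from a complete r-partite graph T with parts B_1,...,B_m,...,B_r (each of size at least 2) by adding one edge u_iv_i inside B_i for each i ≤ m, and deleting the edges u_iu_j and v_iv_j for all 1 ≤ i < j ≤ m. Then G_m contains no copy of Q_r. -/

import Mathlib

open SimpleGraph

private lemma sig_ext' {k : ℕ} {n : Fin k → ℕ} {v w : Σ i : Fin k, Fin (n i)}
    (h1 : v.1 = w.1) (h2 : v.2.val = w.2.val) : v = w := by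
  obtain ⟨i, a⟩ := v
  obtain ⟨j, b⟩ := w
  dsimp at h1 h2
  subst h1
  exact congrArg (Sigma.mk i) (Fin.ext h2)

private def mkv (r p s : ℕ) (h2 : p < r + 1) (h1 : p ≠ 0) (h3 : s < 2) :
    Σ i : Fin (r + 1), Fin (if i.val = 0 then 1 else 2) :=
  ⟨⟨p, h2⟩, ⟨s, by show s < if p = 0 then 1 else 2; rw [if_neg h1]; exact h3⟩⟩

/-- Let `r ≥ 3` and let `Q` be the graph `Q_r` obtained from the complete
`(r+1)`-partite graph `K_{1,2,…,2}` by deleting all but two independent edges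
between the last two parts. Let `G` be obtained from a complete `r`-partite
graph with parts of size at least 2 by adding one edge `uᵢvᵢ` inside each of
the first `m` parts and deleting the edges `uᵢuⱼ` and `vᵢvⱼ` for `i ≠ j`.
Then `G` contains no copy of `Q_r`. -/
theorem stmt_12 (r m : ℕ) (hr : 3 ≤ r) (hm : m ≤ r)
    (n : Fin r → ℕ) (hn : ∀ i, 2 ≤ n i)
    (Q : SimpleGraph (Σ i : Fin (r + 1), Fin (if i.val = 0 then 1 else 2)))
    (hQ : Q = SimpleGraph.fromRel (fun a b => a.1 ≠ b.1 ∧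
      (((a.1.val = r - 1 ∧ b.1.val = r) ∨ (a.1.val = r ∧ b.1.val = r - 1)) →
        a.2.val = b.2.val)))
    (G : SimpleGraph (Σ i : Fin r, Fin (n i)))
    (hG : G = SimpleGraph.fromRel (fun a b =>
      if a.1 = b.1 then a.1.val < m ∧ a.2.val ≤ 1 ∧ b.2.val ≤ 1
      else ¬ (a.1.val < m ∧ b.1.val < m ∧ a.2.val ≤ 1 ∧ a.2.val = b.2.val))) :
    ¬ ∃ f : Q →g G, Function.Injective f := by
  intro hcon
  obtain ⟨f, hf⟩ := hcon
  -- adjacency characterization for Q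
  have hQA : ∀ a b, Q.Adj a b ↔ a.1 ≠ b.1 ∧
      (((a.1.val = r - 1 ∧ b.1.val = r) ∨ (a.1.val = r ∧ b.1.val = r - 1)) →
        a.2.val = b.2.val) := by
    subst hQ
    intro a b
    rw [fromRel_adj]
    constructor
    · rintro ⟨hne, h | h⟩
      · exact h
      · exact ⟨h.1.symm, fun hc => (h.2 (by tauto)).symm⟩
    · intro h
      exact ⟨fun hab => h.1 (by rw [hab]), Or.inl h⟩
  -- adjacency characterization for G
  have hGA : ∀ a b : Σ i : Fin r, Fin (n i), G.Adj a b ↔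
      (a.1 = b.1 ∧ a ≠ b ∧ a.1.val < m ∧ a.2.val ≤ 1 ∧ b.2.val ≤ 1) ∨
      (a.1 ≠ b.1 ∧ ¬ (a.1.val < m ∧ b.1.val < m ∧ a.2.val ≤ 1 ∧ a.2.val = b.2.val)) := by
    subst hG
    intro a b
    rw [fromRel_adj]
    by_cases hab : a.1 = b.1
    · rw [if_pos hab, if_pos hab.symm]
      constructor
      · rintro ⟨hne, h | h⟩
        · exact Or.inl ⟨hab, hne, h.1, h.2.1, h.2.2⟩
        · exact Or.inl ⟨hab, hne, by rw [hab]; exact h.1, h.2.2, h.2.1⟩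
      · rintro (⟨-, hne, h1, h2, h3⟩ | ⟨hne, -⟩)
        · exact ⟨hne, Or.inl ⟨h1, h2, h3⟩⟩
        · exact absurd hab hne
    · rw [if_neg hab, if_neg (fun h => hab h.symm)]
      constructor
      · rintro ⟨hne, h | h⟩
        · exact Or.inr ⟨hab, h⟩
        · refine Or.inr ⟨hab, ?_⟩
          rintro ⟨h1, h2, h3, h4⟩
          exact h ⟨h2, h1, by omega, h4.symm⟩
      · rintro (⟨h, -⟩ | ⟨-, h⟩)
        · exact absurd h hab
        · exact ⟨fun hc => hab (congrArg Sigma.fst hc), Or.inl h⟩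
  -- basic facts about vertices of Q
  have vallt : ∀ v : Σ i : Fin (r + 1), Fin (if i.val = 0 then 1 else 2), v.2.val < 2 := by
    intro v
    refine lt_of_lt_of_le v.2.isLt ?_
    by_cases h0 : v.1.val = 0
    · rw [if_pos h0]; omega
    · rw [if_neg h0]
  have val0 : ∀ v : Σ i : Fin (r + 1), Fin (if i.val = 0 then 1 else 2),
      v.1.val = 0 → v.2.val = 0 := by
    intro v h0
    have h : v.2.val < 1 := lt_of_lt_of_le v.2.isLt (le_of_eq (if_pos h0))
    omega
  -- nonadjacency in Q
  have Qnadj : ∀ a b, a ≠ b → ¬ Q.Adj a b →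
      (a.1.val = b.1.val ∨ (a.1.val = r - 1 ∧ b.1.val = r) ∨ (a.1.val = r ∧ b.1.val = r - 1))
        ∧ a.2.val ≠ b.2.val := by
    intro a b hne hnadj
    rw [hQA] at hnadj
    by_cases hp : a.1 = b.1
    · exact ⟨Or.inl (congrArg Fin.val hp), fun hv => hne (sig_ext' hp hv)⟩
    · have h2 : ¬ ((((a.1.val = r - 1 ∧ b.1.val = r) ∨ (a.1.val = r ∧ b.1.val = r - 1))) →
          a.2.val = b.2.val) := fun h => hnadj ⟨hp, h⟩
      by_cases hC : (a.1.val = r - 1 ∧ b.1.val = r) ∨ (a.1.val = r ∧ b.1.val = r - 1)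
      · exact ⟨Or.inr hC, fun hv => h2 (fun _ => hv)⟩
      · exact absurd (fun hc => absurd hc hC) h2
  -- among any three distinct vertices of Q there is an edge
  have hE3 : ∀ a b c, a ≠ b → a ≠ c → b ≠ c → Q.Adj a b ∨ Q.Adj a c ∨ Q.Adj b c := by
    intro a b c hab hac hbc
    by_contra hcc
    push_neg at hcc
    obtain ⟨n1, n2, n3⟩ := hcc
    have d1 := (Qnadj a b hab n1).2
    have d2 := (Qnadj a c hac n2).2
    have d3 := (Qnadj b c hbc n3).2
    have := vallt a; have := vallt b; have := vallt c
    omega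
  -- image of an edge of Q inside a single part of G
  have hS : ∀ x y, Q.Adj x y → (f x).1 = (f y).1 →
      (f x).1.val < m ∧ (f x).2.val ≤ 1 ∧ (f y).2.val ≤ 1 ∧ (f x).2.val ≠ (f y).2.val := by
    intro x y hxy hp
    have h := f.map_adj hxy
    rw [hGA] at h
    rcases h with ⟨-, hne, hm', h1, h2⟩ | ⟨hne, -⟩
    · exact ⟨hm', h1, h2, fun hv => hne (sig_ext' hp hv)⟩
    · exact absurd hp hne
  -- uniqueness of the inside edge of a part
  have hU : ∀ (i : Fin r) (x y x' y'), Q.Adj x y → Q.Adj x' y' →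
      (f x).1 = i → (f y).1 = i → (f x').1 = i → (f y').1 = i →
      (x = x' ∧ y = y') ∨ (x = y' ∧ y = x') := by
    intro i x y x' y' a a' p1 p2 p3 p4
    obtain ⟨m1, v1, v2, v3⟩ := hS x y a (p1.trans p2.symm)
    obtain ⟨m2, w1, w2, w3⟩ := hS x' y' a' (p3.trans p4.symm)
    by_cases h : (f x).2.val = (f x').2.val
    · left
      have hx : f x = f x' := sig_ext' (p1.trans p3.symm) h
      have hy : f y = f y' := sig_ext' (p2.trans p4.symm) (by omega)
      exact ⟨hf hx, hf hy⟩
    · right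
      have hx : f x = f y' := sig_ext' (p1.trans p4.symm) (by omega)
      have hy : f y = f x' := sig_ext' (p2.trans p3.symm) (by omega)
      exact ⟨hf hx, hf hy⟩
  -- the fibers
  set T : Fin r → Finset (Σ i : Fin (r + 1), Fin (if i.val = 0 then 1 else 2)) :=
    fun i => Finset.univ.filter fun v => (f v).1 = i with hT
  have hTm : ∀ v i, v ∈ T i ↔ (f v).1 = i := by
    intro v i
    simp [hT]
  -- cardinality of the vertex set of Q
  have hcardV : Fintype.card (Σ i : Fin (r + 1), Fin (if i.val = 0 then 1 else 2))
      = 2 * r + 1 := by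
    rw [Fintype.card_sigma]
    simp only [Fintype.card_fin]
    rw [Fin.sum_univ_succ]
    have h0 : (if (0 : Fin (r + 1)).val = 0 then 1 else 2) = 1 := by simp
    have hsucc : ∀ i : Fin r, (if (Fin.succ i).val = 0 then 1 else 2) = 2 := by
      intro i
      rw [if_neg]
      simp [Fin.val_succ]
    rw [h0, Finset.sum_congr rfl fun i _ => hsucc i, Finset.sum_const, Finset.card_univ,
      Fintype.card_fin, smul_eq_mul]
    omega
  have hsum : ∑ i : Fin r, (T i).card = 2 * r + 1 := by
    have h := Finset.card_eq_sum_card_fiberwise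
      (f := fun v : Σ i : Fin (r + 1), Fin (if i.val = 0 then 1 else 2) => (f v).1)
      (s := Finset.univ) (t := Finset.univ) (fun x _ => Finset.mem_univ _)
    rw [Finset.card_univ, hcardV] at h
    simp only [hT]
    exact h.symm
  -- no fiber has more than 3 elements
  have h4 : ∀ i, (T i).card ≤ 3 := by
    intro i
    by_contra hcc
    push_neg at hcc
    obtain ⟨S, hSsub, hS4⟩ := Finset.exists_subset_card_eq (s := T i) (n := 4) hcc
    obtain ⟨d, hd⟩ := Finset.card_pos.mp (by omega : 0 < S.card)
    have hS3 : (S.erase d).card = 3 := by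
      rw [Finset.card_erase_of_mem hd, hS4]
    rw [Finset.card_eq_three] at hS3
    obtain ⟨a, b, c, hab, hac, hbc, habc⟩ := hS3
    have ha' : a ∈ S.erase d := by rw [habc]; simp
    have hb' : b ∈ S.erase d := by rw [habc]; simp
    have hc' : c ∈ S.erase d := by rw [habc]; simp
    have ha : a ∈ T i := hSsub (Finset.mem_of_mem_erase ha')
    have hb : b ∈ T i := hSsub (Finset.mem_of_mem_erase hb')
    have hc : c ∈ T i := hSsub (Finset.mem_of_mem_erase hc')
    have hdT : d ∈ T i := hSsub hd
    have had : a ≠ d := Finset.ne_of_mem_erase ha'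
    have hbd : b ≠ d := Finset.ne_of_mem_erase hb'
    have hcd : c ≠ d := Finset.ne_of_mem_erase hc'
    have inner : ∀ p q t, Q.Adj p q → p ∈ T i → q ∈ T i → t ∈ T i →
        p ≠ t → q ≠ t → p ≠ d → q ≠ d → t ≠ d → False := by
      intro p q t hpq hp hq ht hpt hqt hpd hqd htd
      rcases hE3 t d p htd (fun h => hpt h.symm) (fun h => hpd h.symm) with h | h | h
      · rcases hU i p q t d hpq h ((hTm _ _).mp hp) ((hTm _ _).mp hq) ((hTm _ _).mp ht)
          ((hTm _ _).mp hdT) with ⟨h1, -⟩ | ⟨h1, -⟩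
        · exact hpt h1
        · exact hpd h1
      · rcases hU i p q t p hpq h ((hTm _ _).mp hp) ((hTm _ _).mp hq) ((hTm _ _).mp ht)
          ((hTm _ _).mp hp) with ⟨h1, -⟩ | ⟨-, h2⟩
        · exact hpt h1
        · exact hqt h2
      · rcases hU i p q d p hpq h ((hTm _ _).mp hp) ((hTm _ _).mp hq) ((hTm _ _).mp hdT)
          ((hTm _ _).mp hp) with ⟨h1, -⟩ | ⟨-, h2⟩
        · exact hpd h1
        · exact hqd h2
    rcases hE3 a b c hab hac hbc with h | h | h
    · exact inner a b c h ha hb hc hac hbc had hbd hcd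
    · exact inner a c b h ha hc hb hab (fun hh => hbc hh.symm) had hcd hbd
    · exact inner b c a h hb hc ha (fun hh => hab hh.symm) (fun hh => hac hh.symm) hbd hcd had
  -- fibers of size 3 live in the last two parts
  have hB : ∀ i, 3 ≤ (T i).card → ∀ v ∈ T i, v.1.val = r - 1 ∨ v.1.val = r := by
    intro i h3
    have hc3 : (T i).card = 3 := le_antisymm (h4 i) h3
    rw [Finset.card_eq_three] at hc3
    obtain ⟨a, b, c, hab, hac, hbc, habc⟩ := hc3
    have ha : a ∈ T i := by rw [habc]; simp
    have hb : b ∈ T i := by rw [habc]; simp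
    have hc : c ∈ T i := by rw [habc]; simp
    have key : ∀ p q t, Q.Adj p q → p ∈ T i → q ∈ T i → t ∈ T i → p ≠ t → q ≠ t →
        (p.1.val = r - 1 ∨ p.1.val = r) ∧ (q.1.val = r - 1 ∨ q.1.val = r) ∧
          (t.1.val = r - 1 ∨ t.1.val = r) := by
      intro p q t hpq hp hq ht hpt hqt
      have npt : ¬ Q.Adj t p := by
        intro h
        rcases hU i t p p q h hpq ((hTm _ _).mp ht) ((hTm _ _).mp hp) ((hTm _ _).mp hp)
          ((hTm _ _).mp hq) with ⟨h1, -⟩ | ⟨h1, -⟩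
        · exact hpt h1.symm
        · exact hqt h1.symm
      have nqt : ¬ Q.Adj t q := by
        intro h
        rcases hU i t q p q h hpq ((hTm _ _).mp ht) ((hTm _ _).mp hq) ((hTm _ _).mp hp)
          ((hTm _ _).mp hq) with ⟨h1, -⟩ | ⟨h1, -⟩
        · exact hpt h1.symm
        · exact hqt h1.symm
      have d1 := Qnadj t p (fun h => hpt h.symm) npt
      have d2 := Qnadj t q (fun h => hqt h.symm) nqt
      have hpq1 : p.1.val ≠ q.1.val := fun h => ((hQA p q).mp hpq).1 (Fin.ext h)
      obtain ⟨e1, -⟩ := d1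
      obtain ⟨e2, -⟩ := d2
      omega
    intro v hv
    rw [habc] at hv
    simp only [Finset.mem_insert, Finset.mem_singleton] at hv
    rcases hE3 a b c hab hac hbc with h | h | h
    · obtain ⟨P1, P2, P3⟩ := key a b c h ha hb hc hac hbc
      rcases hv with rfl | rfl | rfl
      exacts [P1, P2, P3]
    · obtain ⟨P1, P2, P3⟩ := key a c b h ha hc hb hab (fun hh => hbc hh.symm)
      rcases hv with rfl | rfl | rfl
      exacts [P1, P3, P2]
    · obtain ⟨P1, P2, P3⟩ := key b c a h hb hc ha (fun hh => hab hh.symm)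
        (fun hh => hac hh.symm)
      rcases hv with rfl | rfl | rfl
      exacts [P3, P1, P2]
  -- the four vertices of the last two parts
  set a0 := mkv r (r - 1) 0 (by omega) (by omega) (by omega) with ha0
  set a1 := mkv r (r - 1) 1 (by omega) (by omega) (by omega) with ha1
  set b0 := mkv r r 0 (by omega) (by omega) (by omega) with hb0
  set b1 := mkv r r 1 (by omega) (by omega) (by omega) with hb1
  have hsub : ∀ i, 3 ≤ (T i).card → T i ⊆ {a0, a1, b0, b1} := by
    intro i h3 v hv
    have hp := hB i h3 v hv
    have hv2 := vallt v
    simp only [Finset.mem_insert, Finset.mem_singleton]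
    rcases hp with hp | hp
    · rcases (by omega : v.2.val = 0 ∨ v.2.val = 1) with hs | hs
      · exact Or.inl (sig_ext' (Fin.ext (by rw [hp, ha0]; rfl)) (by rw [hs, ha0]; rfl))
      · exact Or.inr (Or.inl (sig_ext' (Fin.ext (by rw [hp, ha1]; rfl)) (by rw [hs, ha1]; rfl)))
    · rcases (by omega : v.2.val = 0 ∨ v.2.val = 1) with hs | hs
      · exact Or.inr (Or.inr (Or.inl (sig_ext' (Fin.ext (by rw [hp, hb0]; rfl)) (by rw [hs, hb0]; rfl))))
      · exact Or.inr (Or.inr (Or.inr (sig_ext' (Fin.ext (by rw [hp, hb1]; rfl)) (by rw [hs, hb1]; rfl))))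
  have hquad : ({a0, a1, b0, b1} :
      Finset (Σ i : Fin (r + 1), Fin (if i.val = 0 then 1 else 2))).card ≤ 4 := by
    apply le_trans (Finset.card_insert_le _ _)
    have h1 := Finset.card_insert_le a1 ({b0, b1} :
      Finset (Σ i : Fin (r + 1), Fin (if i.val = 0 then 1 else 2)))
    have h2 := Finset.card_insert_le b0 ({b1} :
      Finset (Σ i : Fin (r + 1), Fin (if i.val = 0 then 1 else 2)))
    have h3 : ({b1} :
      Finset (Σ i : Fin (r + 1), Fin (if i.val = 0 then 1 else 2))).card = 1 :=
      Finset.card_singleton _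
    omega
  -- at most one fiber of size 3
  have huniq : ∀ i j, i ≠ j → 3 ≤ (T i).card → 3 ≤ (T j).card → False := by
    intro i j hij h3i h3j
    have hdisj : Disjoint (T i) (T j) := by
      rw [Finset.disjoint_left]
      intro v hvi hvj
      exact hij (((hTm v i).mp hvi).symm.trans ((hTm v j).mp hvj))
    have hcu := Finset.card_union_of_disjoint hdisj
    have hle := Finset.card_le_card (Finset.union_subset (hsub i h3i) (hsub j h3j))
    omega
  -- pigeonhole: some fiber has at least 3 elements
  obtain ⟨i0, hi0⟩ : ∃ i, 3 ≤ (T i).card := by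
    by_contra hcc
    push_neg at hcc
    have hle : ∑ i : Fin r, (T i).card ≤ ∑ _i : Fin r, 2 :=
      Finset.sum_le_sum fun i _ => by have := hcc i; omega
    rw [Finset.sum_const, Finset.card_univ, Fintype.card_fin, smul_eq_mul] at hle
    omega
  -- the apex vertex
  set x0 : Σ i : Fin (r + 1), Fin (if i.val = 0 then 1 else 2) :=
    ⟨0, ⟨0, by simp⟩⟩ with hx0
  have hx01 : x0.1.val = 0 := by rw [hx0]; rfl
  have hx02 : x0.2.val = 0 := by rw [hx0]
  have hx0adj : ∀ v, v ≠ x0 → Q.Adj x0 v := by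
    intro v hv
    rw [hQA]
    constructor
    · intro h
      apply hv
      have hv1 : v.1.val = 0 := by rw [← h]; exact hx01
      exact sig_ext' h.symm (by rw [val0 v hv1, hx02])
    · rintro (⟨h1, -⟩ | ⟨h1, -⟩) <;> (exfalso; omega)
  set k := (f x0).1 with hk
  have hx0T : x0 ∈ T k := (hTm _ _).mpr rfl
  have hki0 : k ≠ i0 := by
    intro h
    have := hB i0 hi0 x0 (h ▸ hx0T)
    omega
  -- every fiber other than i0 has at most 2 elements
  have hk3 : ∀ i, i ≠ i0 → (T i).card ≤ 2 := by
    intro i hi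
    by_contra hcc
    push_neg at hcc
    exact huniq i i0 hi hcc hi0
  -- the fiber of the apex has at least 2 elements
  have hk2 : 2 ≤ (T k).card := by
    by_contra hcc
    push_neg at hcc
    have h1 : i0 ∈ (Finset.univ : Finset (Fin r)).erase k :=
      Finset.mem_erase.mpr ⟨fun h => hki0 h.symm, Finset.mem_univ _⟩
    have e1 : ∑ i ∈ (Finset.univ.erase k), (T i).card + (T k).card
        = ∑ i : Fin r, (T i).card :=
      Finset.sum_erase_add _ _ (Finset.mem_univ k)
    have e2 : ∑ i ∈ ((Finset.univ.erase k).erase i0), (T i).card + (T i0).card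
        = ∑ i ∈ (Finset.univ.erase k), (T i).card :=
      Finset.sum_erase_add _ _ h1
    have e3 : ∑ i ∈ ((Finset.univ.erase k).erase i0), (T i).card ≤
        ((Finset.univ.erase k).erase i0).card • 2 :=
      Finset.sum_le_card_nsmul _ _ 2 fun i hi =>
        hk3 i (Finset.ne_of_mem_erase hi)
    rw [smul_eq_mul] at e3
    have e4 : ((Finset.univ.erase k).erase i0).card = r - 2 := by
      rw [Finset.card_erase_of_mem h1, Finset.card_erase_of_mem (Finset.mem_univ _),
        Finset.card_univ, Fintype.card_fin]
      omega
    have e5 := h4 i0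
    omega
  -- get the partner of the apex
  obtain ⟨w, hwT, hwx0⟩ := Finset.exists_mem_ne (s := T k) (by omega) x0
  have hpw : (f x0).1 = (f w).1 := by
    rw [← hk]
    exact ((hTm w k).mp hwT).symm
  obtain ⟨hkm, hx0le, -, -⟩ := hS x0 w (hx0adj w hwx0) hpw
  -- get the inside edge of the big fiber
  obtain ⟨S, hSsub, hS3⟩ := Finset.exists_subset_card_eq (s := T i0) (n := 3) hi0
  rw [Finset.card_eq_three] at hS3
  obtain ⟨a, b, c, hab, hac, hbc, rfl⟩ := hS3
  have ha : a ∈ T i0 := hSsub (by simp)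
  have hb : b ∈ T i0 := hSsub (by simp)
  have hc : c ∈ T i0 := hSsub (by simp)
  obtain ⟨p, q, hp, hq, hpq⟩ :
      ∃ p q, p ∈ T i0 ∧ q ∈ T i0 ∧ Q.Adj p q := by
    rcases hE3 a b c hab hac hbc with h | h | h
    exacts [⟨a, b, ha, hb, h⟩, ⟨a, c, ha, hc, h⟩, ⟨b, c, hb, hc, h⟩]
  have hpi : (f p).1 = i0 := (hTm _ _).mp hp
  have hqi : (f q).1 = i0 := (hTm _ _).mp hq
  obtain ⟨hi0m, hple, hqle, hpqne⟩ := hS p q hpq (hpi.trans hqi.symm)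
  have hpx : p ≠ x0 := fun h => hki0 (by rw [hk, ← h]; exact hpi)
  have hqx : q ≠ x0 := fun h => hki0 (by rw [hk, ← h]; exact hqi)
  have hap := f.map_adj (hx0adj p hpx)
  have haq := f.map_adj (hx0adj q hqx)
  rw [hGA] at hap haq
  rcases hap with ⟨h1, -⟩ | ⟨-, h2⟩
  · exact hki0 (by rw [hk, h1]; exact hpi)
  rcases haq with ⟨h1, -⟩ | ⟨-, h3⟩
  · exact hki0 (by rw [hk, h1]; exact hqi)
  have hqm : (f q).1.val < m := by rw [hqi, ← hpi]; exact hi0m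
  have hne1 : (f x0).2.val ≠ (f p).2.val := fun h => h2 ⟨hkm, hi0m, hx0le, h⟩
  have hne2 : (f x0).2.val ≠ (f q).2.val := fun h => h3 ⟨hkm, hqm, hx0le, h⟩
  omega
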